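/- Let W ∈ ℝ^{N×N} be symmetric positive definite, B ∈ ℝ^{N×M}, and let A ∈ ℝ^{N×N} satisfy A·W + W·A = −B·Bᵀ. If A is Hurwitz, then the cross Gramian of the state-space symmetric system (A, B, Bᵀ) equals the prescribed matrix W, i.e. ∫₀^∞ exp(tA) B Bᵀ exp(tA) dt = W. In other words, the inverse Sylvester procedure produces a system whose cross Gramian is exactly the prescribed positive definite matrix. -/

import Mathlib

open MeasureTheory Matrix NormedSpace

open Filter Topology

section aux
attribute [local instance] Matrix.linftyOpNormedRing Matrix.linftyOpNormedAlgebra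
  Matrix.linftyOpNormedSpace

lemma exp_mulVec_eq_sum {n : ℕ} (Ac : Matrix (Fin n) (Fin n) ℂ) (μ : ℂ) (k : ℕ)
    (v : Fin n → ℂ) (hv : ((Ac - μ • 1) ^ k) *ᵥ v = 0) (t : ℝ) :
    exp (t • Ac) *ᵥ v
      = ∑ m ∈ Finset.range k,
          (Complex.exp (t * μ) * t ^ m * ((Nat.factorial m : ℂ))⁻¹) • ((Ac - μ • 1) ^ m *ᵥ v) := by
  set Nm := Ac - μ • 1 with hNm
  have hsmul : t • Ac = ((t : ℂ) * μ) • (1 : Matrix (Fin n) (Fin n) ℂ) + (t : ℂ) • Nm := by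
    ext i j
    simp [hNm, Matrix.smul_apply, Matrix.one_apply, Matrix.sub_apply, Complex.real_smul]
    by_cases h : i = j <;> simp [h] <;> ring
  rw [hsmul, Matrix.exp_add_of_commute _ _ (((Commute.one_left Nm).smul_left _).smul_right _)]
  have h1 : exp (((t : ℂ) * μ) • (1 : Matrix (Fin n) (Fin n) ℂ))
      = Complex.exp ((t : ℂ) * μ) • (1 : Matrix (Fin n) (Fin n) ℂ) := by
    have := map_exp (algebraMap ℂ (Matrix (Fin n) (Fin n) ℂ)) (continuous_algebraMap _ _) ((t : ℂ) * μ)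
    rw [← Complex.exp_eq_exp_ℂ, Algebra.algebraMap_eq_smul_one, Algebra.algebraMap_eq_smul_one] at this
    exact this.symm
  rw [h1, Matrix.smul_mul, Matrix.one_mul, Matrix.smul_mulVec]
  -- now compute exp ((t:ℂ) • Nm) *ᵥ v
  have hker : ∀ m, k ≤ m → Nm ^ m *ᵥ v = 0 := by
    intro m hm
    rw [← Nat.sub_add_cancel hm, pow_add, ← Matrix.mulVec_mulVec, hv, Matrix.mulVec_zero]
  let mv : Matrix (Fin n) (Fin n) ℂ →ₗ[ℂ] (Fin n → ℂ) :=
    { toFun := fun M => M *ᵥ v,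
      map_add' := fun _ _ => Matrix.add_mulVec _ _ _,
      map_smul' := fun c M => by simpa using (Matrix.smul_mulVec c M v) }
  have hmv : exp ((t : ℂ) • Nm) *ᵥ v
      = ∑' m : ℕ, (((Nat.factorial m : ℂ))⁻¹ • ((t : ℂ) • Nm) ^ m) *ᵥ v := by
    rw [exp_eq_tsum (𝕂 := ℂ)]
    exact (mv.toContinuousLinearMap.map_tsum (expSeries_summable' (𝕂 := ℂ) ((t : ℂ) • Nm)) :)
  rw [hmv]
  have hterm : ∀ m : ℕ, (((Nat.factorial m : ℂ))⁻¹ • ((t : ℂ) • Nm) ^ m) *ᵥ v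
      = ((t : ℂ) ^ m * ((Nat.factorial m : ℂ))⁻¹) • (Nm ^ m *ᵥ v) := by
    intro m
    rw [smul_pow, smul_smul, mul_comm, Matrix.smul_mulVec]
  simp_rw [hterm]
  have hz : ∀ m ∉ Finset.range k,
      ((t : ℂ) ^ m * ((Nat.factorial m : ℂ))⁻¹) • (Nm ^ m *ᵥ v) = 0 := by
    intro m hm
    rw [hker m (by simpa using hm), smul_zero]
  rw [tsum_eq_sum hz]
  rw [Finset.smul_sum]
  refine Finset.sum_congr rfl fun m _ => ?_
  rw [smul_smul]
  ring_nf

lemma tendsto_exp_mulVec_of_genEig {n : ℕ} (Ac : Matrix (Fin n) (Fin n) ℂ) (μ : ℂ)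
    (hμ : μ.re < 0) (k : ℕ) (v : Fin n → ℂ) (hv : ((Ac - μ • 1) ^ k) *ᵥ v = 0) :
    Tendsto (fun t : ℝ => exp (t • Ac) *ᵥ v) atTop (𝓝 0) := by
  have hrw : (fun t : ℝ => exp (t • Ac) *ᵥ v)
      = fun t : ℝ => ∑ m ∈ Finset.range k,
          (Complex.exp (t * μ) * t ^ m * ((Nat.factorial m : ℂ))⁻¹) • ((Ac - μ • 1) ^ m *ᵥ v) :=
    funext fun t => exp_mulVec_eq_sum Ac μ k v hv t
  rw [hrw]
  have h0 : (0 : Fin n → ℂ) = ∑ m ∈ Finset.range k,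
      (0 : ℂ) • ((Ac - μ • 1) ^ m *ᵥ v) := by simp
  rw [h0]
  refine tendsto_finset_sum _ fun m _ => ?_
  refine Tendsto.smul_const ?_ _
  -- coefficient tends to 0
  rw [tendsto_zero_iff_norm_tendsto_zero]
  set r : ℝ := -μ.re with hr
  have hrpos : 0 < r := by simp [hr]; linarith
  have hbase : Tendsto (fun t : ℝ => (r * t) ^ m * Real.exp (-(r * t))) atTop (𝓝 0) :=
    (Real.tendsto_pow_mul_exp_neg_atTop_nhds_zero m).comp (tendsto_id.const_mul_atTop hrpos)
  have hbase2 : Tendsto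
      (fun t : ℝ => (r ^ m)⁻¹ * ((Nat.factorial m : ℝ))⁻¹ * ((r * t) ^ m * Real.exp (-(r * t))))
      atTop (𝓝 0) := by simpa using hbase.const_mul ((r ^ m)⁻¹ * ((Nat.factorial m : ℝ))⁻¹)
  refine squeeze_zero' ?_ ?_ hbase2
  · filter_upwards with t; positivity
  · filter_upwards [eventually_ge_atTop (0 : ℝ)] with t ht
    have hre : ((t : ℂ) * μ).re = t * μ.re := by simp
    have hn : ‖Complex.exp (↑t * μ) * ↑t ^ m * ((Nat.factorial m : ℂ))⁻¹‖
        = t ^ m * Real.exp (t * μ.re) * ((Nat.factorial m : ℝ))⁻¹ := by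
      rw [norm_mul, norm_mul, Complex.norm_exp, hre]
      simp [abs_of_nonneg ht, mul_comm]
    rw [hn, show -(r * t) = t * μ.re by rw [hr]; ring]
    apply le_of_eq
    have hrm : (r : ℝ) ^ m ≠ 0 := by positivity
    field_simp
    ring

lemma tendsto_exp_mulVec {n : ℕ} (Ac : Matrix (Fin n) (Fin n) ℂ)
    (hs : ∀ μ ∈ spectrum ℂ Ac, μ.re < 0) (v : Fin n → ℂ) :
    Tendsto (fun t : ℝ => exp (t • Ac) *ᵥ v) atTop (𝓝 0) := by
  have hv : v ∈ (⊤ : Submodule ℂ (Fin n → ℂ)) := trivial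
  rw [← Module.End.iSup_maxGenEigenspace_eq_top
    ((Matrix.toLinAlgEquiv' : Matrix (Fin n) (Fin n) ℂ ≃ₐ[ℂ] _) Ac)] at hv
  refine Submodule.iSup_induction _ (motive := fun w =>
      Tendsto (fun t : ℝ => exp (t • Ac) *ᵥ w) atTop (𝓝 0)) hv ?_ ?_ ?_
  · intro μ x hx
    by_cases hx0 : x = 0
    · simpa [hx0] using tendsto_const_nhds
    obtain ⟨k, hk⟩ := (Module.End.mem_maxGenEigenspace _ _ _).mp hx
    have hmat : ((Matrix.toLinAlgEquiv' Ac - μ • 1) ^ k)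
        = Matrix.toLinAlgEquiv' ((Ac - μ • 1) ^ k) := by
      rw [map_pow, map_sub]
      congr 2
      rw [← map_one (Matrix.toLinAlgEquiv' (n := Fin n) (R := ℂ)),
        _root_.map_smul (Matrix.toLinAlgEquiv' (n := Fin n) (R := ℂ))]
    have hk' : ((Ac - μ • 1) ^ k) *ᵥ x = 0 := by
      rw [hmat] at hk
      exact hk
    have hμspec : μ ∈ spectrum ℂ Ac := by
      have hne : Module.End.HasGenEigenvalue (Matrix.toLinAlgEquiv' Ac) μ k := by
        rw [Module.End.hasGenEigenvalue_iff]
        refine Submodule.ne_bot_iff _ |>.mpr ⟨x, ?_, hx0⟩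
        rw [Module.End.mem_genEigenspace]
        exact ⟨k, le_rfl, hk⟩
      have := (Module.End.hasEigenvalue_of_hasGenEigenvalue hne).mem_spectrum
      rwa [AlgEquiv.spectrum_eq] at this
    exact tendsto_exp_mulVec_of_genEig Ac μ (hs μ hμspec) k x hk'
  · simpa using tendsto_const_nhds
  · intro x y hx hy
    have := hx.add hy
    simpa [Matrix.mulVec_add] using this

lemma exp_entry_hasDerivAt {n : ℕ} (A : Matrix (Fin n) (Fin n) ℝ) (t : ℝ) (i j : Fin n) :
    HasDerivAt (fun u : ℝ => exp (u • A) i j) ((A * exp (t • A)) i j) t := by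
  have hD : HasDerivAt (fun u : ℝ => exp (u • A)) (A * exp (t • A)) t :=
    hasDerivAt_exp_smul_const' A t
  let lm : Matrix (Fin n) (Fin n) ℝ →ₗ[ℝ] ℝ :=
    { toFun := fun M => M i j, map_add' := fun _ _ => rfl, map_smul' := fun _ _ => rfl }
  exact (lm.toContinuousLinearMap.hasFDerivAt.comp_hasDerivAt t hD :)

lemma exp_comm {n : ℕ} (A : Matrix (Fin n) (Fin n) ℝ) (t : ℝ) :
    A * exp (t • A) = exp (t • A) * A :=
  (((Commute.refl A).smul_right t).exp_right).eq

lemma exp_map_ofReal {n : ℕ} (A : Matrix (Fin n) (Fin n) ℝ) (t : ℝ) :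
    (exp (t • A)).map Complex.ofReal = exp (t • A.map Complex.ofReal) := by
  have hc : Continuous (Complex.ofRealHom.mapMatrix :
      Matrix (Fin n) (Fin n) ℝ →+* Matrix (Fin n) (Fin n) ℂ) :=
    continuous_id.matrix_map Complex.continuous_ofReal
  have := map_exp (Complex.ofRealHom.mapMatrix :
      Matrix (Fin n) (Fin n) ℝ →+* Matrix (Fin n) (Fin n) ℂ) hc (t • A)
  have h2 : (Complex.ofRealHom.mapMatrix (t • A) : Matrix (Fin n) (Fin n) ℂ)
      = t • A.map Complex.ofReal := by
    ext i j
    simp [RingHom.mapMatrix_apply, Matrix.map_apply, Matrix.smul_apply]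
  rw [h2] at this
  exact this

lemma exp_entry_tendsto {n : ℕ} (A : Matrix (Fin n) (Fin n) ℝ)
    (hA : ∀ μ ∈ spectrum ℂ (A.map Complex.ofReal), μ.re < 0) (i j : Fin n) :
    Tendsto (fun t : ℝ => exp (t • A) i j) atTop (𝓝 0) := by
  have hvec := tendsto_exp_mulVec (A.map Complex.ofReal) hA (Pi.single j 1)
  have h2 : Tendsto (fun t : ℝ => exp (t • A.map Complex.ofReal) i j) atTop (𝓝 0) := by
    have h3 := (tendsto_pi_nhds.mp hvec) i
    simp only [Matrix.mulVec_single, mul_one, Pi.zero_apply] at h3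
    simpa using h3
  have h4 : ∀ t : ℝ, exp (t • A) i j = (exp (t • A.map Complex.ofReal) i j).re := by
    intro t
    rw [← exp_map_ofReal]
    simp [Matrix.map_apply]
  simp_rw [h4]
  simpa [Function.comp_def] using (Complex.continuous_re.tendsto 0).comp h2
end aux

attribute [local instance] Matrix.normedAddCommGroup Matrix.normedSpace


lemma matrix_eq_sum_smul {p q : ℕ} (Z : Matrix (Fin p) (Fin q) ℝ) :
    Z = ∑ i : Fin p, ∑ j : Fin q, Z i j • Matrix.single i j 1 := by
  ext a b
  simp [Matrix.sum_apply, Matrix.single, Matrix.smul_apply, Matrix.of_apply,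
    ite_and, Finset.sum_ite_eq', Finset.sum_ite_eq]

lemma hasDerivAt_of_entries {p q : ℕ} {f : ℝ → Matrix (Fin p) (Fin q) ℝ}
    {D : Matrix (Fin p) (Fin q) ℝ} {t : ℝ}
    (h : ∀ i j, HasDerivAt (fun s => f s i j) (D i j) t) : HasDerivAt f D t := by
  have hf : f = fun s => ∑ i : Fin p, ∑ j : Fin q, f s i j • Matrix.single i j 1 :=
    funext fun s => matrix_eq_sum_smul (f s)
  rw [hf, matrix_eq_sum_smul D]
  exact HasDerivAt.fun_sum fun i _ => HasDerivAt.fun_sum fun j _ => (h i j).smul_const _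

lemma entry_hasDerivAt {p q : ℕ} {f : ℝ → Matrix (Fin p) (Fin q) ℝ}
    {D : Matrix (Fin p) (Fin q) ℝ} {t : ℝ} (h : HasDerivAt f D t) (i : Fin p) (j : Fin q) :
    HasDerivAt (fun s => f s i j) (D i j) t := by
  let lm : Matrix (Fin p) (Fin q) ℝ →ₗ[ℝ] ℝ :=
    { toFun := fun M => M i j, map_add' := fun _ _ => rfl, map_smul' := fun _ _ => rfl }
  have hb : ∀ M : Matrix (Fin p) (Fin q) ℝ, ‖lm M‖ ≤ 1 * ‖M‖ := fun M => by
    show ‖M i j‖ ≤ 1 * ‖M‖; rw [one_mul]; exact M.norm_entry_le_entrywise_sup_norm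
  exact ((lm.mkContinuous 1 hb).hasFDerivAt.comp_hasDerivAt t h :)

lemma tendsto_of_entries {p q : ℕ} {f : ℝ → Matrix (Fin p) (Fin q) ℝ}
    (h : ∀ i j, Tendsto (fun s => f s i j) atTop (𝓝 0)) : Tendsto f atTop (𝓝 0) := by
  have hf : f = fun s => ∑ i : Fin p, ∑ j : Fin q, f s i j • Matrix.single i j 1 :=
    funext fun s => matrix_eq_sum_smul (f s)
  rw [hf]
  have := tendsto_finset_sum (Finset.univ : Finset (Fin p)) fun i _ =>
    tendsto_finset_sum (Finset.univ : Finset (Fin q)) fun j _ =>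
      (h i j).smul_const (Matrix.single i j (1:ℝ))
  simpa using this

lemma continuous_of_entries {p q : ℕ} {f : ℝ → Matrix (Fin p) (Fin q) ℝ}
    (h : ∀ i j, Continuous fun s => f s i j) : Continuous f := by
  have hf : f = fun s => ∑ i : Fin p, ∑ j : Fin q, f s i j • Matrix.single i j 1 :=
    funext fun s => matrix_eq_sum_smul (f s)
  rw [hf]
  exact continuous_finset_sum _ fun i _ => continuous_finset_sum _ fun j _ =>
    (h i j).smul continuous_const

lemma norm_matmul_le {p q r : ℕ} (X : Matrix (Fin p) (Fin q) ℝ) (Y : Matrix (Fin q) (Fin r) ℝ) :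
    ‖X * Y‖ ≤ (q : ℝ) * ‖X‖ * ‖Y‖ := by
  rw [Matrix.norm_le_iff (by positivity)]
  intro i j
  rw [Matrix.mul_apply]
  calc ‖∑ k, X i k * Y k j‖ ≤ ∑ k, ‖X i k * Y k j‖ := norm_sum_le _ _
    _ ≤ ∑ _k : Fin q, ‖X‖ * ‖Y‖ := by
        refine Finset.sum_le_sum fun k _ => ?_
        rw [norm_mul]
        exact mul_le_mul (X.norm_entry_le_entrywise_sup_norm)
          (Y.norm_entry_le_entrywise_sup_norm) (norm_nonneg _) (norm_nonneg _)
    _ = (q : ℝ) * ‖X‖ * ‖Y‖ := by simp [mul_assoc]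


lemma hasDerivAt_matmul {p : ℕ} {X Y : ℝ → Matrix (Fin p) (Fin p) ℝ}
    {X' Y' : Matrix (Fin p) (Fin p) ℝ} {t : ℝ}
    (hX : HasDerivAt X X' t) (hY : HasDerivAt Y Y' t) :
    HasDerivAt (fun s => X s * Y s) (X' * Y t + X t * Y') t := by
  refine hasDerivAt_of_entries fun i j => ?_
  have hfun : (fun s => (X s * Y s) i j) = fun s => ∑ k, X s i k * Y s k j :=
    funext fun s => Matrix.mul_apply
  rw [hfun]
  have := HasDerivAt.fun_sum (fun k (_ : k ∈ Finset.univ) =>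
    ((entry_hasDerivAt hX i k).mul (entry_hasDerivAt hY k j)))
  have heq : ∑ k ∈ Finset.univ, (X' i k * Y t k j + X t i k * Y' k j)
      = (X' * Y t + X t * Y') i j := by
    rw [Matrix.add_apply, Matrix.mul_apply, Matrix.mul_apply, Finset.sum_add_distrib]
  rw [← heq]
  exact this

lemma hasDerivAt_exp_matrix {n : ℕ} (A : Matrix (Fin n) (Fin n) ℝ) (t : ℝ) :
    HasDerivAt (fun u : ℝ => exp (u • A)) (A * exp (t • A)) t :=
  hasDerivAt_of_entries fun i j => exp_entry_hasDerivAt A t i j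

lemma continuous_exp_matrix {n : ℕ} (A : Matrix (Fin n) (Fin n) ℝ) :
    Continuous (fun u : ℝ => exp (u • A)) :=
  continuous_of_entries fun i j => continuous_iff_continuousAt.mpr fun t =>
    (exp_entry_hasDerivAt A t i j).continuousAt

lemma tendsto_exp_matrix {n : ℕ} (A : Matrix (Fin n) (Fin n) ℝ)
    (hA : ∀ μ ∈ spectrum ℂ (A.map Complex.ofReal), μ.re < 0) :
    Tendsto (fun t : ℝ => exp (t • A)) atTop (𝓝 0) :=
  tendsto_of_entries fun i j => exp_entry_tendsto A hA i j

lemma exp_add_smul {n : ℕ} (A : Matrix (Fin n) (Fin n) ℝ) (a b : ℝ) :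
    exp ((a + b) • A) = exp (a • A) * exp (b • A) := by
  rw [add_smul]
  exact Matrix.exp_add_of_commute _ _ (((Commute.refl A).smul_left a).smul_right b)

lemma exp_decay_bound {n : ℕ} (A : Matrix (Fin n) (Fin n) ℝ)
    (hA : ∀ μ ∈ spectrum ℂ (A.map Complex.ofReal), μ.re < 0) :
    ∃ c > (0:ℝ), ∃ C > (0:ℝ), ∀ t : ℝ, 0 ≤ t → ‖exp (t • A)‖ ≤ C * Real.exp (-c * t) := by
  -- find T with (n:ℝ) * ‖exp (T • A)‖ ≤ 1/2
  have hev : ∀ᶠ t : ℝ in atTop, ‖exp (t • A)‖ < (2 * (n:ℝ) + 2)⁻¹ :=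
    (NormedAddCommGroup.tendsto_nhds_zero.mp (tendsto_exp_matrix A hA)) _ (by positivity)
  obtain ⟨T, hT0, hTs⟩ : ∃ T : ℝ, 0 < T ∧ ‖exp (T • A)‖ < (2 * (n:ℝ) + 2)⁻¹ := by
    rcases (hev.and (eventually_gt_atTop (0:ℝ))).exists with ⟨T, h1, h2⟩
    exact ⟨T, h2, h1⟩
  have hhalf : (n : ℝ) * ‖exp (T • A)‖ ≤ 1 / 2 := by
    have h1 : (n:ℝ) * ‖exp (T • A)‖ ≤ (n:ℝ) * (2 * (n:ℝ) + 2)⁻¹ := by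
      refine mul_le_mul_of_nonneg_left hTs.le (by positivity)
    refine h1.trans ?_
    rw [mul_inv_le_iff₀ (by positivity : (0:ℝ) < 2 * (n:ℝ) + 2)]
    nlinarith [Nat.cast_nonneg (α := ℝ) n]
  obtain ⟨K, hK⟩ : ∃ K, ∀ s ∈ Set.Icc (0:ℝ) T, ‖exp (s • A)‖ ≤ K :=
    isCompact_Icc.exists_bound_of_continuousOn (continuous_exp_matrix A).continuousOn
  set K' : ℝ := max K 1 with hK'
  have hK'pos : 0 < K' := lt_of_lt_of_le one_pos (le_max_right _ _)
  have claim : ∀ m : ℕ, ∀ t : ℝ, (m : ℝ) * T ≤ t → t ≤ ((m : ℝ) + 1) * T →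
      ‖exp (t • A)‖ ≤ K' * (1/2) ^ m := by
    intro m
    induction m with
    | zero =>
      intro t h1 h2
      simp only [Nat.cast_zero, zero_mul, pow_zero, mul_one] at *
      exact (hK t ⟨h1, by linarith⟩).trans (le_max_left _ _)
    | succ m ih =>
      intro t h1 h2
      have hTt : T ≤ t := by
        push_cast at h1
        nlinarith [Nat.cast_nonneg (α := ℝ) m]
      have hsplit : exp (t • A) = exp (T • A) * exp ((t - T) • A) := by
        rw [← exp_add_smul]
        congr 1
        ring_nf
      calc ‖exp (t • A)‖ = ‖exp (T • A) * exp ((t - T) • A)‖ := by rw [hsplit]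
        _ ≤ (n:ℝ) * ‖exp (T • A)‖ * ‖exp ((t - T) • A)‖ := norm_matmul_le _ _
        _ ≤ (1/2) * (K' * (1/2) ^ m) := by
            refine mul_le_mul hhalf (ih (t - T) (by push_cast at h1 ⊢; linarith)
              (by push_cast at h2 ⊢; linarith)) (norm_nonneg _) (by norm_num)
        _ = K' * (1/2) ^ (m + 1) := by ring
  refine ⟨Real.log 2 / T, by positivity, 2 * K', by positivity, fun t ht => ?_⟩
  set m : ℕ := ⌊t / T⌋₊ with hm
  have hmle : (m : ℝ) * T ≤ t := by
    rw [hm]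
    have := Nat.floor_le (by positivity : 0 ≤ t / T)
    calc ((⌊t / T⌋₊ : ℝ)) * T ≤ (t / T) * T := by nlinarith
      _ = t := by field_simp
  have hmlt : t < ((m : ℝ) + 1) * T := by
    have := Nat.lt_floor_add_one (t / T)
    calc t = (t / T) * T := by field_simp
      _ < ((m:ℝ) + 1) * T := by nlinarith
  have hb := claim m t hmle hmlt.le
  have hlog : (0:ℝ) < Real.log 2 := Real.log_pos (by norm_num)
  have hpow : ((1:ℝ)/2) ^ m ≤ 2 * Real.exp (-(Real.log 2 / T) * t) := by
    have h1 : ((1:ℝ)/2) ^ m = Real.exp (-((m:ℝ) * Real.log 2)) := by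
      rw [← Real.exp_log (show (0:ℝ) < (1/2) ^ m by positivity), Real.log_pow, one_div,
        Real.log_inv]
      push_cast
      ring_nf
    rw [h1]
    have h2 : -((m:ℝ) * Real.log 2) ≤ Real.log 2 + -(Real.log 2 / T) * t := by
      have h3 : t / T < (m:ℝ) + 1 := by
        rw [div_lt_iff₀ hT0]
        linarith [hmlt]
      have h4 : (Real.log 2 / T) * t = (t / T) * Real.log 2 := by
        field_simp
      nlinarith
    calc Real.exp (-((m:ℝ) * Real.log 2)) ≤ Real.exp (Real.log 2 + -(Real.log 2 / T) * t) :=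
        Real.exp_le_exp.mpr h2
      _ = 2 * Real.exp (-(Real.log 2 / T) * t) := by
          rw [Real.exp_add, Real.exp_log (by norm_num : (0:ℝ) < 2)]
  calc ‖exp (t • A)‖ ≤ K' * (1/2)^m := hb
    _ ≤ K' * (2 * Real.exp (-(Real.log 2 / T) * t)) := by
        exact mul_le_mul_of_nonneg_left hpow hK'pos.le
    _ = 2 * K' * Real.exp (-(Real.log 2 / T) * t) := by ring


lemma continuous_integrand {N M : ℕ} (A : Matrix (Fin N) (Fin N) ℝ)
    (B : Matrix (Fin N) (Fin M) ℝ) :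
    Continuous fun t : ℝ => exp (t • A) * B * Bᵀ * exp (t • A) :=
  (((continuous_exp_matrix A).matrix_mul continuous_const).matrix_mul
    continuous_const).matrix_mul (continuous_exp_matrix A)

lemma integrableOn_integrand {N M : ℕ} (A : Matrix (Fin N) (Fin N) ℝ)
    (hA : ∀ μ ∈ spectrum ℂ (A.map Complex.ofReal), μ.re < 0)
    (B : Matrix (Fin N) (Fin M) ℝ) :
    @IntegrableOn _ _ _ PseudoMetricSpace.toUniformSpace.toTopologicalSpace _
      (fun t : ℝ => exp (t • A) * B * Bᵀ * exp (t • A)) (Set.Ioi 0) volume := by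
  obtain ⟨c, hc, C, hC, hbd⟩ := exp_decay_bound A hA
  set D : ℝ := (N:ℝ) * (M:ℝ) * (N:ℝ) * ‖B‖ * ‖Bᵀ‖ * (C * C) with hD
  refine MeasureTheory.Integrable.mono'
    (g := fun t => D * Real.exp (-(2*c) * t)) ?_ ?_ ?_
  · exact ((exp_neg_integrableOn_Ioi 0 (by positivity : (0:ℝ) < 2*c)).const_mul D :)
  · exact (show @Continuous _ _ _ PseudoMetricSpace.toUniformSpace.toTopologicalSpace _ from
      continuous_integrand A B).aestronglyMeasurable.restrict
  · rw [MeasureTheory.ae_restrict_iff' measurableSet_Ioi]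
    filter_upwards with t ht
    have ht0 : (0:ℝ) ≤ t := (Set.mem_Ioi.mp ht).le
    have hE := hbd t ht0
    have hEnn : (0:ℝ) ≤ ‖exp (t • A)‖ := norm_nonneg _
    calc ‖exp (t • A) * B * Bᵀ * exp (t • A)‖
        ≤ (N:ℝ) * ‖exp (t • A) * B * Bᵀ‖ * ‖exp (t • A)‖ := norm_matmul_le _ _
      _ ≤ (N:ℝ) * ((M:ℝ) * ‖exp (t • A) * B‖ * ‖Bᵀ‖) * ‖exp (t • A)‖ := by
          gcongr
          exact norm_matmul_le _ _
      _ ≤ (N:ℝ) * ((M:ℝ) * ((N:ℝ) * ‖exp (t • A)‖ * ‖B‖) * ‖Bᵀ‖) * ‖exp (t • A)‖ := by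
          gcongr
          exact norm_matmul_le _ _
      _ = ((N:ℝ) * (M:ℝ) * (N:ℝ) * ‖B‖ * ‖Bᵀ‖) * (‖exp (t • A)‖ * ‖exp (t • A)‖) := by
          ring
      _ ≤ ((N:ℝ) * (M:ℝ) * (N:ℝ) * ‖B‖ * ‖Bᵀ‖)
            * ((C * Real.exp (-c * t)) * (C * Real.exp (-c * t))) := by
          gcongr <;> positivity
      _ = D * Real.exp (-(2*c) * t) := by
          rw [hD, show Real.exp (-(2*c)*t) = Real.exp (-c*t) * Real.exp (-c*t) by
            rw [← Real.exp_add]; congr 1; ring]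
          ring


/-- `A` is Hurwitz: every complex eigenvalue of `A` has strictly negative real part. -/
def IsHurwitz {N : ℕ} (A : Matrix (Fin N) (Fin N) ℝ) : Prop :=
  ∀ μ ∈ spectrum ℂ (A.map Complex.ofReal), μ.re < 0

/-- If `W` is symmetric positive definite, `A` is Hurwitz and `A W + W A = -B Bᵀ`,
then the cross Gramian of the state-space symmetric system `(A, B, Bᵀ)` equals the
prescribed matrix `W`. -/
theorem crossGramian_of_inverse_sylvester {N M : ℕ}
    (W : Matrix (Fin N) (Fin N) ℝ) (hW : W.PosDef)
    (B : Matrix (Fin N) (Fin M) ℝ)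
    (A : Matrix (Fin N) (Fin N) ℝ) (hA : IsHurwitz A)
    (hAW : A * W + W * A = -(B * Bᵀ)) :
    (∫ t in Set.Ioi (0 : ℝ), NormedSpace.exp (t • A) * B * Bᵀ * NormedSpace.exp (t • A)) = W := by
  have hA : ∀ μ ∈ spectrum ℂ (A.map Complex.ofReal), μ.re < 0 := hA
  set E : ℝ → Matrix (Fin N) (Fin N) ℝ := fun t => exp (t • A) with hE
  have hderiv : ∀ t : ℝ, HasDerivAt (fun s => -(E s * W * E s))
      (E t * B * Bᵀ * E t) t := by
    intro t
    have h1 : HasDerivAt (fun s => E s * W) (A * E t * W + E t * 0) t :=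
      hasDerivAt_matmul (hasDerivAt_exp_matrix A t) (hasDerivAt_const t W)
    have h2 : HasDerivAt (fun s => E s * W * E s)
        ((A * E t * W + E t * 0) * E t + (E t * W) * (A * E t)) t :=
      hasDerivAt_matmul h1 (hasDerivAt_exp_matrix A t)
    have key : (A * E t * W + E t * 0) * E t + (E t * W) * (A * E t)
        = -(E t * B * Bᵀ * E t) := by
      have hc : A * E t = E t * A := exp_comm A t
      calc (A * E t * W + E t * 0) * E t + (E t * W) * (A * E t)
          = (A * E t) * (W * E t) + (E t * (W * A)) * E t := by noncomm_ring
        _ = (E t * A) * (W * E t) + (E t * (W * A)) * E t := by rw [hc]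
        _ = E t * (A * W + W * A) * E t := by noncomm_ring
        _ = E t * (-(B * Bᵀ)) * E t := by rw [hAW]
        _ = -(E t * B * Bᵀ * E t) := by
            rw [Matrix.mul_neg, Matrix.neg_mul]
            congr 1
            rw [Matrix.mul_assoc (E t) B Bᵀ]
    have := h2.neg
    rw [key] at this
    simp only [Pi.neg_def, neg_neg] at this
    exact this
  have htend : Tendsto (fun t => -(E t * W * E t)) atTop (𝓝 0) := by
    have h0 := tendsto_exp_matrix A hA
    have hg : Continuous fun X : Matrix (Fin N) (Fin N) ℝ => -(X * W * X) :=
      ((continuous_id.matrix_mul continuous_const).matrix_mul continuous_id).neg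
    have := (hg.tendsto 0).comp h0
    simpa [Function.comp_def] using this
  have hint := integrableOn_integrand A hA B
  have := MeasureTheory.integral_Ioi_of_hasDerivAt_of_tendsto'
    (f := fun t => -(E t * W * E t)) (f' := fun t => E t * B * Bᵀ * E t)
    (a := 0) (fun x _ => hderiv x) hint htend
  rw [this]
  have hE0 : E 0 = 1 := by
    letI : NormedRing (Matrix (Fin N) (Fin N) ℝ) := Matrix.linftyOpNormedRing
    letI : NormedAlgebra ℝ (Matrix (Fin N) (Fin N) ℝ) := Matrix.linftyOpNormedAlgebra
    rw [hE]
    simp only [zero_smul]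
    exact NormedSpace.exp_zero
  simp [hE0]
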